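/- Let Θ = ⟨c, V, P⟩ be a star set in ℝⁿ where P is a conjunction of linear constraints C α ≤ d over α ∈ ℝᵐ. The over-approximate ReLU step at index i (when a split occurs) defined by: Θ' = ⟨c', (V', eᵢ-direction new generator), P'⟩ with a fresh predicate variable β constrained by β ≥ 0, β ≥ cᵢ + Σⱼ αⱼ vⱼᵢ, and β ≤ (uᵢ/(uᵢ−lᵢ))·(cᵢ + Σⱼ αⱼ vⱼᵢ − lᵢ), where [lᵢ, uᵢ] bounds the i-th coordinate over Θ with lᵢ < 0 < uᵢ, satisfies: the image of Θ under stepReLUᵢ is a subset of Θ' (soundness of approxStepReLU). -/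

import Mathlib

/-- A star set over ℝⁿ with m predicate variables. -/
def starSet {n m : ℕ} (c : Fin n → ℝ) (V : Fin m → Fin n → ℝ)
    (P : (Fin m → ℝ) → Prop) : Set (Fin n → ℝ) :=
  {x | ∃ α : Fin m → ℝ, x = c + ∑ j, α j • V j ∧ P α}

/-- Soundness of the approxStepReLU operation: the exact stepReLU image at coordinate i
is contained in the over-approximate star set obtained by zeroing the i-th coordinate of
the center and all old generators, adding the new generator eᵢ with a fresh predicate
variable β subject to the three triangle constraints. -/
theorem approxStepReLU_sound {n m : ℕ} (c : Fin n → ℝ) (V : Fin m → Fin n → ℝ)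
    (P : (Fin m → ℝ) → Prop) (i : Fin n) (l u : ℝ) (hl : l < 0) (hu : 0 < u)
    (hbound : ∀ x ∈ starSet c V P, l ≤ x i ∧ x i ≤ u) :
    (fun x => Function.update x i (max 0 (x i))) '' starSet c V P
      ⊆ starSet (Function.update c i 0)
          (Fin.snoc (fun j : Fin m => Function.update (V j) i 0) (Pi.single i (1 : ℝ)))
          (fun α' : Fin (m + 1) → ℝ =>
            P (fun j => α' j.castSucc)
            ∧ 0 ≤ α' (Fin.last m)
            ∧ c i + ∑ j, α' j.castSucc * V j i ≤ α' (Fin.last m)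
            ∧ α' (Fin.last m)
                ≤ u / (u - l) * (c i + (∑ j, α' j.castSucc * V j i) - l)) := by
  rintro y ⟨x, hx, rfl⟩
  obtain ⟨α, rfl, hP⟩ := hx
  have hxi : (c + ∑ j, α j • V j) i = c i + ∑ j, α j * V j i := by
    simp [Finset.sum_apply]
  obtain ⟨hlb, hub⟩ := hbound _ ⟨α, rfl, hP⟩
  rw [hxi] at hlb hub
  set t : ℝ := c i + ∑ j, α j * V j i with ht
  refine ⟨Fin.snoc α (max 0 t), ?_, ?_⟩
  · funext k
    simp only [Pi.add_apply, Finset.sum_apply, Fin.sum_univ_castSucc, Pi.smul_apply,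
      Fin.snoc_castSucc, Fin.snoc_last, smul_eq_mul]
    by_cases hk : k = i
    · subst hk
      simp [hxi, Function.update_self, ht]
    · simp [Function.update_of_ne hk, Finset.sum_apply, Pi.single_eq_of_ne hk]
  · refine ⟨by simpa using hP, by simp, ?_, ?_⟩
    · simpa [← ht] using le_max_right 0 t
    · have hul : 0 < u - l := by linarith
      rw [div_mul_eq_mul_div, le_div_iff₀ hul]
      simp only [Fin.snoc_last, Fin.snoc_castSucc, ← ht]
      rcases le_or_gt t 0 with h | h
      · rw [max_eq_left h]; nlinarith
      · rw [max_eq_right h.le]; nlinarith
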